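/- arXiv:1811.12577 — 2 statements merged into one kernel-verified Lean document; each statement's English description precedes it below -/
import Mathlib

section
/- (Reduction to the Gorenstein case.) Let k be a field. Suppose that for every Artinian local k-algebra (R', 𝔪') whose socle {r ∈ R' : r·𝔪' = 0} is one-dimensional as a vector space over the residue field R'/𝔪' (i.e., R' is Gorenstein), the zero ideal of R' is arc-closed: (0)^ac = 0. Then the zero ideal of every Artinian local k-algebra is arc-closed. -/
open PowerSeries

universe u

/-- A "based arc" on a local `k`-algebra `R` with coefficients in a commutative `k`-algebra `S`
is a `k`-algebra homomorphism `φ : R → S[[t]]` with `φ(𝔪) ⊆ (t)`.  The *arc closure* `𝔞^ac` of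
an ideal `𝔞 ⊆ 𝔪` is the set of `f ∈ R` killed by every based arc that kills `𝔞`. -/
def arcClosure (k R : Type u) [Field k] [CommRing R] [Algebra k R] [IsLocalRing R]
    (𝔞 : Ideal R) : Set R :=
  {f | ∀ (S : Type u) [CommRing S] [Algebra k S] (φ : R →ₐ[k] PowerSeries S),
    (∀ m ∈ IsLocalRing.maximalIdeal R, constantCoeff (φ m) = 0) →
    (∀ a ∈ 𝔞, φ a = 0) → φ f = 0}

/-- Reduction to the Gorenstein case: if the zero ideal of every Gorenstein Artinian local
`k`-algebra (one whose socle is one-dimensional over the residue field, i.e. is generated by a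
single nonzero element) is arc-closed, then the zero ideal of every Artinian local `k`-algebra
is arc-closed. -/
theorem arcClosure_bot_of_gorenstein_case (k : Type u) [Field k]
    (hGor : ∀ (R' : Type u) [CommRing R'] [Algebra k R'] [IsLocalRing R'] [IsArtinianRing R'],
      (∃ g : R', g ≠ 0 ∧
        {r : R' | ∀ m ∈ IsLocalRing.maximalIdeal R', r * m = 0} = (Ideal.span {g} : Ideal R')) →
      arcClosure k R' ⊥ = {0})
    (R : Type u) [CommRing R] [Algebra k R] [IsLocalRing R] [IsArtinianRing R] :
    arcClosure k R ⊥ = {0} := by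
  ext f
  simp only [Set.mem_singleton_iff]
  constructor
  · intro hf
    by_contra hne
    -- choose an ideal `I` maximal among those not containing `f` (Zorn's lemma)
    have hzorn : ∀ c ⊆ {J : Ideal R | f ∉ J}, IsChain (· ≤ ·) c → ∀ J ∈ c,
        ∃ ub ∈ {J : Ideal R | f ∉ J}, ∀ z ∈ c, z ≤ ub := by
      intro c hc hc' J hJ
      refine ⟨sSup c, fun hx ↦ ?_, fun _ ↦ le_sSup⟩
      haveI : Nonempty c := ⟨⟨J, hJ⟩⟩
      have ⟨p, hp⟩ := (Submodule.mem_iSup_of_directed _ hc'.directed).mp (sSup_eq_iSup' c ▸ hx)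
      exact hc p.2 hp
    obtain ⟨I, -, hImax⟩ :=
      zorn_le_nonempty₀ {J : Ideal R | f ∉ J} hzorn ⊥ (by simpa using hne)
    have hfI : f ∉ I := hImax.1
    have hImax' : ∀ J : Ideal R, I < J → f ∈ J := fun J hJ ↦ by
      by_contra h; exact (hImax.not_prop_of_gt hJ) h
    have hIne : I ≠ ⊤ := fun h ↦ hfI (h ▸ Submodule.mem_top)
    have hIle : I ≤ IsLocalRing.maximalIdeal R := IsLocalRing.le_maximalIdeal hIne
    -- the quotient ring
    set R' := R ⧸ I with hR'
    haveI : Nontrivial R' := Ideal.Quotient.nontrivial_iff.mpr hIne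
    haveI : IsLocalRing R' :=
      IsLocalRing.of_surjective' (Ideal.Quotient.mk I) Ideal.Quotient.mk_surjective
    haveI : IsArtinianRing R' :=
      Ideal.Quotient.mk_surjective.isArtinianRing (f := Ideal.Quotient.mk I)
    set g : R' := Ideal.Quotient.mk I f with hg
    have hgne : g ≠ 0 := fun h ↦ hfI ((Ideal.Quotient.eq_zero_iff_mem).mp h)
    -- every nonzero ideal of R' contains g
    have hcontain : ∀ J' : Ideal R', J' ≠ ⊥ → g ∈ J' := by
      intro J' hJ'
      obtain ⟨x, hxJ, hx0⟩ := Submodule.exists_mem_ne_zero_of_ne_bot hJ'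
      obtain ⟨y, rfl⟩ := Ideal.Quotient.mk_surjective x
      have hlt : I < J'.comap (Ideal.Quotient.mk I) := by
        refine lt_of_le_of_ne (fun z hz ↦ ?_) (fun h ↦ ?_)
        · simp [Ideal.mem_comap, Ideal.Quotient.eq_zero_iff_mem.mpr hz]
        · exact hx0 (Ideal.Quotient.eq_zero_iff_mem.mpr (h ▸ hxJ))
      exact hImax' _ hlt
    classical
    -- the maximal ideal of R' is nilpotent
    obtain ⟨n, hn⟩ : IsNilpotent (IsLocalRing.maximalIdeal R') := by
      rw [← IsLocalRing.jacobson_eq_maximalIdeal (⊥ : Ideal R') bot_ne_top]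
      exact IsArtinianRing.isNilpotent_jacobson_bot
    -- find a nonzero socle element x
    have hex : ∃ m, (IsLocalRing.maximalIdeal R') ^ m = ⊥ := ⟨n, hn⟩
    set n₀ := Nat.find hex with hn₀
    have hn₀pos : n₀ ≠ 0 := by
      intro h
      have := Nat.find_spec hex
      rw [← hn₀, h, pow_zero, Ideal.one_eq_top] at this
      exact top_ne_bot this
    have hlt : (IsLocalRing.maximalIdeal R') ^ (n₀ - 1) ≠ ⊥ :=
      Nat.find_min hex (Nat.sub_lt (Nat.pos_of_ne_zero hn₀pos) one_pos)
    obtain ⟨x, hxmem, hx0⟩ := Submodule.exists_mem_ne_zero_of_ne_bot hlt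
    have hxsoc : ∀ m ∈ IsLocalRing.maximalIdeal R', x * m = 0 := by
      intro m hm
      have : x * m ∈ (IsLocalRing.maximalIdeal R') ^ n₀ := by
        have : x * m ∈ (IsLocalRing.maximalIdeal R') ^ (n₀ - 1) * IsLocalRing.maximalIdeal R' :=
          Ideal.mul_mem_mul hxmem hm
        rwa [← pow_succ, Nat.sub_add_cancel (Nat.one_le_iff_ne_zero.mpr hn₀pos)] at this
      rw [Nat.find_spec hex] at this
      exact this
    -- g is in the socle
    have hgsoc : ∀ m ∈ IsLocalRing.maximalIdeal R', g * m = 0 := by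
      have hx : g ∈ Ideal.span {x} := by
        refine hcontain _ (fun h ↦ hx0 ?_)
        have : x ∈ Ideal.span {x} := Ideal.mem_span_singleton_self x
        rw [h] at this
        simpa using this
      obtain ⟨c, hc⟩ := Ideal.mem_span_singleton.mp hx
      intro m hm
      rw [hc, mul_assoc]
      exact hxsoc _ (Ideal.mul_mem_left _ c hm)
    -- the socle equals the span of g
    have hsocle : {r : R' | ∀ m ∈ IsLocalRing.maximalIdeal R', r * m = 0}
        = (Ideal.span {g} : Ideal R') := by
      ext r
      simp only [Set.mem_setOf_eq, SetLike.mem_coe]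
      constructor
      · intro hr
        by_cases hr0 : r = 0
        · simp [hr0]
        have hgr : g ∈ Ideal.span {r} := by
          refine hcontain _ (fun h ↦ hr0 ?_)
          have : r ∈ Ideal.span {r} := Ideal.mem_span_singleton_self r
          rw [h] at this
          simpa using this
        obtain ⟨c, hc⟩ := Ideal.mem_span_singleton.mp hgr
        by_cases hu : IsUnit c
        · obtain ⟨u, rfl⟩ := hu
          rw [Ideal.mem_span_singleton]
          exact ⟨↑u⁻¹, by rw [hc, mul_assoc, Units.mul_inv, mul_one]⟩
        · exfalso
          apply hgne
          rw [hc]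
          exact hr c (IsLocalRing.mem_maximalIdeal c |>.mpr hu)
      · intro hr m hm
        obtain ⟨c, hc⟩ := Ideal.mem_span_singleton.mp hr
        rw [hc, mul_assoc]
        exact hgsoc _ (Ideal.mul_mem_left _ c hm)
    -- apply the Gorenstein hypothesis
    have harc : arcClosure k R' ⊥ = {0} := hGor R' ⟨g, hgne, hsocle⟩
    -- g lies in the arc closure of ⊥ in R'
    have hgarc : g ∈ arcClosure k R' ⊥ := by
      intro S _ _ ψ hψ _
      have hφ := hf S (ψ.comp (Ideal.Quotient.mkₐ k I)) ?_ (fun a ha ↦ by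
        simp only [Ideal.mem_bot] at ha
        simp [ha])
      · exact hφ
      · intro m hm
        have hmem : Ideal.Quotient.mk I m ∈ IsLocalRing.maximalIdeal R' := by
          rw [IsLocalRing.mem_maximalIdeal, mem_nonunits_iff]
          intro hu
          obtain ⟨u, hu⟩ := hu
          obtain ⟨a, ha⟩ := Ideal.Quotient.mk_surjective (↑u⁻¹ : R')
          have hone : Ideal.Quotient.mk I (m * a) = 1 := by
            rw [map_mul, ha, ← hu, Units.mul_inv]
          have h1 : m * a - 1 ∈ I := by
            rw [← Ideal.Quotient.eq_zero_iff_mem, map_sub, hone, map_one, sub_self]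
          have h2 : (1 : R) ∈ IsLocalRing.maximalIdeal R := by
            have h := Ideal.sub_mem (IsLocalRing.maximalIdeal R)
              (Ideal.mul_mem_right a _ hm) (hIle h1)
            simp at h
          exact (IsLocalRing.maximalIdeal.isMaximal R).ne_top
            ((Ideal.eq_top_iff_one _).mpr h2)
        have := hψ _ hmem
        exact this
    rw [harc] at hgarc
    exact hgne hgarc
  · rintro rfl
    intro S _ _ φ _ _
    simp
end

section
/- Let k be a field and let R be a commutative k-algebra with an ℕ-grading R = ⊕_{i ≥ 0} R_[i] making R a graded k-algebra (so the image of k lies in R_[0]). Assume R is local with maximal ideal 𝔪 = ⊕_{i ≥ 1} R_[i] (the irrelevant ideal). Then the zero ideal of R is arc-closed: the only element of R annihilated by every based arc is 0. -/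
open PowerSeries

open DirectSum

universe u

section aux

variable (k R : Type u) [Field k] [CommRing R] [Algebra k R]
  (𝒜 : ℕ → Submodule k R) [GradedAlgebra 𝒜]

/-- The Rees arc sending a homogeneous element of degree `i` to `a tⁱ`, as a map from the
direct sum. -/
lemma monomial_mul_monomial' {R : Type u} [CommRing R] (i j : ℕ) (a b : R) :
    PowerSeries.monomial i a * PowerSeries.monomial j b
      = PowerSeries.monomial (i + j) (a * b) := by
  have := MvPowerSeries.monomial_mul_monomial (Finsupp.single () i) (Finsupp.single () j) a b
  rw [← Finsupp.single_add] at this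
  exact this

noncomputable def reesArcAux : (⨁ i, 𝒜 i) →ₐ[k] PowerSeries R :=
  DirectSum.toAlgebra k (fun i => ↥(𝒜 i)) (fun i => (PowerSeries.monomial (R := R) i).restrictScalars k ∘ₗ (𝒜 i).subtype)
    (by simp)
    (fun {i j} ai aj => by
      simp [monomial_mul_monomial', SetLike.coe_gMul])

lemma coeff_reesArcAux (x : ⨁ i, 𝒜 i) (n : ℕ) :
    PowerSeries.coeff n (reesArcAux k R 𝒜 x) = x n := by
  induction x using DirectSum.induction_on with
  | zero => simp
  | of i a =>
    have h1 : reesArcAux k R 𝒜 (DirectSum.of _ i a) = PowerSeries.monomial i (a : R) := by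
      simp [reesArcAux, DirectSum.toAlgebra, DirectSum.toSemiring_of]
      exact DirectSum.toSemiring_of _ _ _ _ _
    rw [h1, PowerSeries.coeff_monomial]
    by_cases h : n = i
    · subst h; simp
    · rw [if_neg h, DirectSum.of_eq_of_ne _ _ _ h]; simp
  | add x y hx hy => simp [map_add, hx, hy]

/-- The Rees arc on `R`. -/
noncomputable def reesArc : R →ₐ[k] PowerSeries R :=
  (reesArcAux k R 𝒜).comp (DirectSum.decomposeAlgEquiv 𝒜).toAlgHom

lemma coeff_reesArc (f : R) (n : ℕ) :
    PowerSeries.coeff n (reesArc k R 𝒜 f) = DirectSum.decompose 𝒜 f n :=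
  coeff_reesArcAux k R 𝒜 _ n

end aux

/-- If `R` is an ℕ-graded `k`-algebra which is local with maximal ideal the irrelevant ideal
`⊕_{i ≥ 1} R_[i]`, then the zero ideal of `R` is arc-closed: the only element of `R`
annihilated by every based arc is `0`. -/
theorem arcClosure_bot_of_graded (k R : Type u) [Field k] [CommRing R] [Algebra k R]
    [IsLocalRing R] (𝒜 : ℕ → Submodule k R) [GradedAlgebra 𝒜]
    (hmax : IsLocalRing.maximalIdeal R = (HomogeneousIdeal.irrelevant 𝒜).toIdeal) :
    arcClosure k R ⊥ = {0} := by
  ext f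
  simp only [Set.mem_singleton_iff]
  constructor
  · intro hf
    have h0 := hf R (reesArc k R 𝒜)
      (fun m hm => by
        rw [hmax] at hm
        have : (DirectSum.decompose 𝒜 m 0 : R) = 0 := hm
        rw [← PowerSeries.coeff_zero_eq_constantCoeff_apply, coeff_reesArc, this])
      (fun a ha => by simp only [Ideal.mem_bot] at ha; simp [ha])
    have hcomp : ∀ n, (DirectSum.decompose 𝒜 f n : R) = 0 := fun n => by
      rw [← coeff_reesArc k R 𝒜 f n, h0, map_zero]
    classical
    have := DirectSum.sum_support_decompose 𝒜 f
    rw [← this]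
    exact Finset.sum_eq_zero fun i _ => hcomp i
  · rintro rfl
    intro S _ _ φ _ _
    simp
end
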